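/- Let n ≥ 2 be an integer, γ > 1, ε > 0, C0 > 0, and let α := ( −(n−1) + √( (n−1)² + 4( n−2 + 2/γ ) ) ) / 2. Let h : [0,1] → ℝ be continuous on [0,1], twice continuously differentiable on (0,1), nondecreasing, with Lh = 0 on (0,1), h(0) = 0, h(1) = 1, and r ≤ h(r) ≤ r^α for all r ∈ (0,1). Let A ∈ C¹([0,1)) and B ∈ C([0,1)) satisfy |A(r)| ≤ C0·r and |B(r)| ≤ C0 for all r ∈ (0,1), and set H := A' + B on (0,1). Then the function g(r) := h(r) · ∫_0^r [ ( h(s)² s^{n−2} (ε + s²) )^{−1} · ∫_0^s h(τ) τ^{n−2} (ε + τ²) H(τ) dτ ] ds is well defined and twice continuously differentiable on (0,1), satisfies Lg = H on (0,1), and satisfies |g(r)| ≤ C·C0·r^{1+α} for all r ∈ (0,1), where C > 0 depends only on n and γ (in particular C is independent of ε). -/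

import Mathlib

open Set Filter

noncomputable section

/-- The ODE operator `L`:
`(L h)(r) = h'' + ((n-2)/r + 2r/(ε+r²)) h' - ((n-2)/r² + 2/(γ(ε+r²))) h`. -/
def Lop (n : ℕ) (γ ε : ℝ) (h : ℝ → ℝ) (r : ℝ) : ℝ :=
  deriv (deriv h) r + (((n:ℝ) - 2)/r + 2*r/(ε + r^2)) * deriv h r
    - (((n:ℝ) - 2)/r^2 + 2/(γ*(ε + r^2))) * h r

/-- `α := (-(n-1) + √((n-1)² + 4(n-2 + 2/γ)))/2`. -/
def alphaN (n : ℕ) (γ : ℝ) : ℝ :=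
  (-((n:ℝ) - 1) + Real.sqrt (((n:ℝ)-1)^2 + 4*((n:ℝ) - 2 + 2/γ)))/2

/-- `h` is a normalized solution of `Lh = 0` on `(0,1)`: continuous on `[0,1]`,
twice continuously differentiable on `(0,1)`, with `h(0) = 0` and `h(1) = 1`. -/
def IsODESol (n : ℕ) (γ ε : ℝ) (h : ℝ → ℝ) : Prop :=
  ContinuousOn h (Icc (0:ℝ) 1) ∧ (∀ r ∈ Ioo (0:ℝ) 1, ContDiffAt ℝ 2 h r) ∧
    (∀ r ∈ Ioo (0:ℝ) 1, Lop n γ ε h r = 0) ∧ h 0 = 0 ∧ h 1 = 1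

/-- The variation-of-parameters solution
`g(r) := h(r) ∫₀^r (h(s)² s^{n-2} (ε+s²))⁻¹ ∫₀^s h(τ) τ^{n-2} (ε+τ²) H(τ) dτ ds`. -/
def vparam (n : ℕ) (ε : ℝ) (h H : ℝ → ℝ) (r : ℝ) : ℝ :=
  h r * ∫ s in (0:ℝ)..r, ((h s)^2 * s^(n-2) * (ε + s^2))⁻¹ *
    ∫ τ in (0:ℝ)..s, h τ * τ^(n-2) * (ε + τ^2) * H τ

/-- The derivative of a monotone (on `[0,1]`) function is nonnegative on `(0,1)`. -/
lemma deriv_nonneg_of_monotoneOn {h : ℝ → ℝ} (hm : MonotoneOn h (Icc 0 1)) {r : ℝ}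
    (hr : r ∈ Ioo (0:ℝ) 1) (hd : DifferentiableAt ℝ h r) : 0 ≤ deriv h r := by
  have hde := hd.hasDerivAt
  rw [hasDerivAt_iff_tendsto_slope] at hde
  refine ge_of_tendsto hde ?_
  filter_upwards [self_mem_nhdsWithin,
    mem_nhdsWithin_of_mem_nhds (Ioo_mem_nhds hr.1 hr.2)] with x hne hx
  have hrI : r ∈ Icc (0:ℝ) 1 := ⟨hr.1.le, hr.2.le⟩
  have hxI : x ∈ Icc (0:ℝ) 1 := ⟨hx.1.le, hx.2.le⟩
  rw [slope_def_field]
  rcases lt_or_gt_of_ne (hne : x ≠ r) with hlt | hgt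
  · exact div_nonneg_iff.2 (Or.inr ⟨sub_nonpos.2 (hm hxI hrI hlt.le), sub_nonpos.2 hlt.le⟩)
  · exact div_nonneg (sub_nonneg.2 (hm hrI hxI hgt.le)) (sub_nonneg.2 hgt.le)

set_option maxHeartbeats 4000000 in
/-- Step 2 of the proof of Theorem 1.7: the variation-of-parameters formula
produces a solution of `Lg = H` with `|g(r)| ≤ C C₀ r^{1+α}`, with `C = C(n,γ)`
independent of `ε`. -/
theorem variation_of_parameters (n : ℕ) (hn : 2 ≤ n) (γ : ℝ) (hγ : 1 < γ) :
    ∃ C : ℝ, 0 < C ∧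
      ∀ ε : ℝ, 0 < ε → ∀ C0 : ℝ, 0 < C0 →
      ∀ h : ℝ → ℝ, IsODESol n γ ε h → MonotoneOn h (Icc (0:ℝ) 1) →
      (∀ r ∈ Ioo (0:ℝ) 1, r ≤ h r ∧ h r ≤ r ^ alphaN n γ) →
      ∀ A B : ℝ → ℝ,
      ContinuousOn A (Ico (0:ℝ) 1) →
      (∀ r ∈ Ioo (0:ℝ) 1, DifferentiableAt ℝ A r) →
      ContinuousOn (deriv A) (Ico (0:ℝ) 1) →
      ContinuousOn B (Ico (0:ℝ) 1) →
      (∀ r ∈ Ioo (0:ℝ) 1, |A r| ≤ C0 * r) →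
      (∀ r ∈ Ioo (0:ℝ) 1, |B r| ≤ C0) →
      -- well-definedness of the iterated integrals
      (∀ s ∈ Ioo (0:ℝ) 1, IntervalIntegrable
          (fun τ => h τ * τ^(n-2) * (ε + τ^2) * (deriv A τ + B τ)) MeasureTheory.volume 0 s) ∧
      (∀ r ∈ Ioo (0:ℝ) 1, IntervalIntegrable
          (fun s => ((h s)^2 * s^(n-2) * (ε + s^2))⁻¹ *
            ∫ τ in (0:ℝ)..s, h τ * τ^(n-2) * (ε + τ^2) * (deriv A τ + B τ))
          MeasureTheory.volume 0 r) ∧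
      (∀ r ∈ Ioo (0:ℝ) 1,
          ContDiffAt ℝ 2 (vparam n ε h (fun t => deriv A t + B t)) r) ∧
      (∀ r ∈ Ioo (0:ℝ) 1,
          Lop n γ ε (vparam n ε h (fun t => deriv A t + B t)) r = deriv A r + B r) ∧
      (∀ r ∈ Ioo (0:ℝ) 1,
          |vparam n ε h (fun t => deriv A t + B t) r| ≤ C * C0 * r ^ (1 + alphaN n γ)) := by
  refine ⟨4, by norm_num, ?_⟩
  intro ε hε C0 hC0 h hsol hmono hbd A B hAc hAd hA'c hBc hAb hBb
  obtain ⟨hcont, hC2, hLh, h0, h1⟩ := hsol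
  set φ : ℝ → ℝ := fun τ => h τ * τ^(n-2) * (ε + τ^2) * (deriv A τ + B τ) with hφdef
  set I : ℝ → ℝ := fun s => ∫ τ in (0:ℝ)..s, φ τ with hIdef
  set f : ℝ → ℝ := fun s => ((h s)^2 * s^(n-2) * (ε + s^2))⁻¹ * I s with hfdef
  set G : ℝ → ℝ := fun r => ∫ s in (0:ℝ)..r, f s with hGdef
  have hvp : vparam n ε h (fun t => deriv A t + B t) = fun r => h r * G r := rfl
  -- basic positivity facts
  have hεs : ∀ s : ℝ, (0:ℝ) < ε + s^2 := fun s => by positivity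
  have hdiff : ∀ τ ∈ Ioo (0:ℝ) 1, DifferentiableAt ℝ h τ := fun τ hτ =>
    (hC2 τ hτ).differentiableAt (by norm_num)
  have hh0 : ∀ s ∈ Icc (0:ℝ) 1, 0 ≤ h s := fun s hs => by
    have := hmono (left_mem_Icc.2 zero_le_one) hs hs.1
    rwa [h0] at this
  have hpos : ∀ r ∈ Ioo (0:ℝ) 1, 0 < h r := fun r hr => lt_of_lt_of_le hr.1 (hbd r hr).1
  have hdnn : ∀ τ ∈ Ioo (0:ℝ) 1, 0 ≤ deriv h τ := fun τ hτ =>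
    deriv_nonneg_of_monotoneOn hmono hτ (hdiff τ hτ)
  have hwpos : ∀ s : ℝ, 0 < s → (0:ℝ) < s^(n-2)*(ε+s^2) := fun s hs =>
    mul_pos (pow_pos hs _) (hεs s)
  have hwmono : ∀ x s : ℝ, 0 ≤ x → x ≤ s → x^(n-2)*(ε+x^2) ≤ s^(n-2)*(ε+s^2) := by
    intro x s hx hxs
    exact mul_le_mul (pow_le_pow_left₀ hx hxs _) (by nlinarith) (hεs x).le
      (pow_nonneg (hx.trans hxs) _)
  -- continuity of the inner integrand
  have hHc : ContinuousOn (fun t => deriv A t + B t) (Ico (0:ℝ) 1) := hA'c.add hBc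
  have hφc : ContinuousOn φ (Ico (0:ℝ) 1) := by
    rw [hφdef]
    exact (((hcont.mono Ico_subset_Icc_self).mul (continuous_pow (n-2)).continuousOn).mul
      (continuous_const.add (continuous_pow 2)).continuousOn).mul hHc
  -- first bullet: integrability of the inner integrand
  have int1 : ∀ s ∈ Ioo (0:ℝ) 1, IntervalIntegrable φ MeasureTheory.volume 0 s := by
    intro s hs
    apply ContinuousOn.intervalIntegrable
    rw [uIcc_of_le hs.1.le]
    exact hφc.mono (fun x hx => ⟨hx.1, lt_of_le_of_lt hx.2 hs.2⟩)
  have hφIoo : ContinuousOn φ (Ioo (0:ℝ) 1) := hφc.mono Ioo_subset_Ico_self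
  have hI' : ∀ s ∈ Ioo (0:ℝ) 1, HasDerivAt I (φ s) s := by
    intro s hs
    exact intervalIntegral.integral_hasDerivAt_right (int1 s hs)
      (hφIoo.stronglyMeasurableAtFilter isOpen_Ioo s hs)
      (hφIoo.continuousAt (Ioo_mem_nhds hs.1 hs.2))
  -- the derivative of the weight s^(n-2)(ε+s²)
  set wD : ℝ → ℝ := fun τ => (↑(n-2) : ℝ) * τ^(n-2-1) * (ε + τ^2) + τ^(n-2) * (2*τ) with hwDdef
  have hwd : ∀ τ : ℝ, HasDerivAt (fun s : ℝ => s^(n-2) * (ε + s^2)) (wD τ) τ := by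
    intro τ
    have hh := (hasDerivAt_pow (n-2) τ).mul ((hasDerivAt_pow 2 τ).const_add ε)
    refine hh.congr_deriv ?_
    rw [hwDdef]
    norm_num
  have hwdnn : ∀ τ : ℝ, 0 ≤ τ → 0 ≤ wD τ := by
    intro τ hτ
    have h1 : (0:ℝ) ≤ (↑(n-2):ℝ) * τ^(n-2-1) * (ε + τ^2) :=
      mul_nonneg (mul_nonneg (Nat.cast_nonneg _) (pow_nonneg hτ _)) (hεs τ).le
    have h2 : (0:ℝ) ≤ τ^(n-2) * (2*τ) := mul_nonneg (pow_nonneg hτ _) (by linarith)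
    simp only [hwDdef]
    linarith
  have hwdc : Continuous wD := by rw [hwDdef]; fun_prop
  -- integrability and FTC for deriv h (monotone!)
  have hdint : ∀ s ∈ Ioo (0:ℝ) 1, IntervalIntegrable (deriv h) MeasureTheory.volume 0 s := by
    intro s hs
    apply intervalIntegral.intervalIntegrable_deriv_of_nonneg (g := h)
    · rw [uIcc_of_le hs.1.le]
      exact hcont.mono (Icc_subset_Icc le_rfl hs.2.le)
    · rw [min_eq_left hs.1.le, max_eq_right hs.1.le]
      exact fun x hx => (hdiff x ⟨hx.1, hx.2.trans hs.2⟩).hasDerivAt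
    · rw [min_eq_left hs.1.le, max_eq_right hs.1.le]
      exact fun x hx => hdnn x ⟨hx.1, hx.2.trans hs.2⟩
  have hdftc : ∀ s ∈ Ioo (0:ℝ) 1, ∫ τ in (0:ℝ)..s, deriv h τ = h s := by
    intro s hs
    rw [intervalIntegral.integral_eq_sub_of_hasDeriv_right_of_le hs.1.le
      (hcont.mono (Icc_subset_Icc le_rfl hs.2.le))
      (fun x hx => ((hdiff x ⟨hx.1, hx.2.trans hs.2⟩).hasDerivAt).hasDerivWithinAt)
      (hdint s hs), h0, sub_zero]
  have hwftc : ∀ s : ℝ, 0 ≤ s → ∫ τ in (0:ℝ)..s, wD τ ≤ s^(n-2)*(ε+s^2) := by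
    intro s hs
    rw [intervalIntegral.integral_eq_sub_of_hasDerivAt (fun x _ => hwd x)
      (hwdc.intervalIntegrable 0 s)]
    have h00 : (0:ℝ) ≤ (0:ℝ)^(n-2) * (ε + (0:ℝ)^2) := by positivity
    linarith
  -- the key estimate on the inner integral
  have keyI : ∀ s ∈ Ioo (0:ℝ) 1, |I s| ≤ 4 * C0 * (s * (h s * (s^(n-2)*(ε+s^2)))) := by
    intro s hs
    have hIccIco : Icc (0:ℝ) s ⊆ Ico (0:ℝ) 1 := fun x hx => ⟨hx.1, lt_of_le_of_lt hx.2 hs.2⟩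
    have hIccIcc : Icc (0:ℝ) s ⊆ Icc (0:ℝ) 1 := Icc_subset_Icc le_rfl hs.2.le
    have hIocIoo : Ioc (0:ℝ) s ⊆ Ioo (0:ℝ) 1 := fun x hx => ⟨hx.1, lt_of_le_of_lt hx.2 hs.2⟩
    have hsIcc : s ∈ Icc (0:ℝ) 1 := ⟨hs.1.le, hs.2.le⟩
    have hws0 : (0:ℝ) < s^(n-2)*(ε+s^2) := hwpos s hs.1
    set v1 : ℝ → ℝ := fun τ => deriv h τ * ((τ^(n-2)*(ε+τ^2)) * A τ) with hv1def
    set v3 : ℝ → ℝ := fun τ => (h τ * (τ^(n-2)*(ε+τ^2))) * deriv A τ with hv3def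
    set v4 : ℝ → ℝ := fun τ => (h τ * wD τ) * A τ with hv4def
    set bP : ℝ → ℝ := fun τ => h τ * τ^(n-2) * (ε + τ^2) * B τ with hbPdef
    have hcs : ContinuousOn h (Icc (0:ℝ) s) := hcont.mono hIccIcc
    have hAcs : ContinuousOn A (Icc (0:ℝ) s) := hAc.mono hIccIco
    have hA'cs : ContinuousOn (deriv A) (Icc (0:ℝ) s) := hA'c.mono hIccIco
    have hBcs : ContinuousOn B (Icc (0:ℝ) s) := hBc.mono hIccIco
    have hwcs : ContinuousOn (fun τ : ℝ => τ^(n-2)*(ε+τ^2)) (Icc (0:ℝ) s) := by fun_prop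
    have v3int : IntervalIntegrable v3 MeasureTheory.volume 0 s := by
      apply ContinuousOn.intervalIntegrable
      rw [uIcc_of_le hs.1.le]
      exact (hcs.mul hwcs).mul hA'cs
    have v4int : IntervalIntegrable v4 MeasureTheory.volume 0 s := by
      apply ContinuousOn.intervalIntegrable
      rw [uIcc_of_le hs.1.le]
      exact (hcs.mul hwdc.continuousOn).mul hAcs
    have bPint : IntervalIntegrable bP MeasureTheory.volume 0 s := by
      apply ContinuousOn.intervalIntegrable
      rw [uIcc_of_le hs.1.le]
      exact ((hcs.mul (continuous_pow (n-2)).continuousOn).mul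
        (continuous_const.add (continuous_pow 2)).continuousOn).mul hBcs
    -- v1 is integrable by comparison with (deriv h)
    have v1meas : MeasureTheory.AEStronglyMeasurable v1
        (MeasureTheory.volume.restrict (Set.uIoc (0:ℝ) s)) := by
      rw [uIoc_of_le hs.1.le, hv1def]
      exact ((stronglyMeasurable_deriv h).aestronglyMeasurable).mul
        (((hwcs.mono Ioc_subset_Icc_self).mul
          (hAcs.mono Ioc_subset_Icc_self)).aestronglyMeasurable measurableSet_Ioc)
    have v1bound : ∀ τ ∈ Ioc (0:ℝ) s, |v1 τ| ≤ (s^(n-2)*(ε+s^2)) * (C0*s) * deriv h τ := by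
      intro τ hτ
      have hτ1 : τ ∈ Ioo (0:ℝ) 1 := hIocIoo hτ
      have h1 : |v1 τ| = deriv h τ * |(τ^(n-2)*(ε+τ^2)) * A τ| := by
        rw [hv1def, abs_mul, abs_of_nonneg (hdnn τ hτ1)]
      rw [h1]
      have h2 : |(τ^(n-2)*(ε+τ^2)) * A τ| ≤ (s^(n-2)*(ε+s^2)) * (C0*s) := by
        rw [abs_mul, abs_of_nonneg (mul_nonneg (pow_nonneg hτ.1.le _) (hεs τ).le)]
        apply mul_le_mul (hwmono τ s hτ.1.le hτ.2) ?_ (abs_nonneg _) hws0.le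
        calc |A τ| ≤ C0 * τ := hAb τ hτ1
          _ ≤ C0 * s := by nlinarith [hτ.2, hC0]
      calc deriv h τ * |(τ^(n-2)*(ε+τ^2)) * A τ| ≤ deriv h τ * ((s^(n-2)*(ε+s^2)) * (C0*s)) :=
            mul_le_mul_of_nonneg_left h2 (hdnn τ hτ1)
        _ = (s^(n-2)*(ε+s^2)) * (C0*s) * deriv h τ := by ring
    have v1int : IntervalIntegrable v1 MeasureTheory.volume 0 s := by
      apply IntervalIntegrable.mono_fun' ((hdint s hs).const_mul ((s^(n-2)*(ε+s^2)) * (C0*s)))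
        v1meas
      rw [uIoc_of_le hs.1.le]
      refine (MeasureTheory.ae_restrict_iff' measurableSet_Ioc).2 (.of_forall fun τ hτ => ?_)
      simpa [Real.norm_eq_abs] using v1bound τ hτ
    -- integration by parts via FTC
    have huderiv : ∀ τ ∈ Ioo (0:ℝ) s, HasDerivAt (fun τ => (h τ * (τ^(n-2)*(ε+τ^2))) * A τ)
        ((deriv h τ * (τ^(n-2)*(ε+τ^2)) + h τ * wD τ) * A τ
          + (h τ * (τ^(n-2)*(ε+τ^2))) * deriv A τ) τ := by
      intro τ hτ
      have hτ1 : τ ∈ Ioo (0:ℝ) 1 := ⟨hτ.1, hτ.2.trans hs.2⟩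
      exact (((hdiff τ hτ1).hasDerivAt).mul (hwd τ)).mul (hAd τ hτ1).hasDerivAt
    have hueq : ∀ τ : ℝ, (deriv h τ * (τ^(n-2)*(ε+τ^2)) + h τ * wD τ) * A τ
          + (h τ * (τ^(n-2)*(ε+τ^2))) * deriv A τ = v1 τ + (v4 τ + v3 τ) := by
      intro τ
      rw [hv1def, hv3def, hv4def]
      ring
    have hu'int : IntervalIntegrable (fun τ => (deriv h τ * (τ^(n-2)*(ε+τ^2)) + h τ * wD τ) * A τ
        + (h τ * (τ^(n-2)*(ε+τ^2))) * deriv A τ) MeasureTheory.volume 0 s := by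
      have heq : (fun τ => (deriv h τ * (τ^(n-2)*(ε+τ^2)) + h τ * wD τ) * A τ
          + (h τ * (τ^(n-2)*(ε+τ^2))) * deriv A τ) = fun τ => v1 τ + (v4 τ + v3 τ) := by
        funext τ; exact hueq τ
      rw [heq]
      exact v1int.add (v4int.add v3int)
    have hsplit : ∫ τ in (0:ℝ)..s, (v1 τ + (v4 τ + v3 τ)) = h s * (s^(n-2)*(ε+s^2)) * A s := by
      have hftc := intervalIntegral.integral_eq_sub_of_hasDeriv_right_of_le hs.1.le
        ((hcs.mul hwcs).mul hAcs) (fun x hx => (huderiv x hx).hasDerivWithinAt) hu'int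
      have hcongr : ∫ τ in (0:ℝ)..s, (v1 τ + (v4 τ + v3 τ))
          = ∫ τ in (0:ℝ)..s, ((deriv h τ * (τ^(n-2)*(ε+τ^2)) + h τ * wD τ) * A τ
              + (h τ * (τ^(n-2)*(ε+τ^2))) * deriv A τ) :=
        intervalIntegral.integral_congr (fun τ _ => (hueq τ).symm)
      rw [hcongr, hftc]
      simp only [Pi.mul_apply, h0]
      ring
    have hadd : ∫ τ in (0:ℝ)..s, (v1 τ + (v4 τ + v3 τ))
        = (∫ τ in (0:ℝ)..s, v1 τ) + ((∫ τ in (0:ℝ)..s, v4 τ) + ∫ τ in (0:ℝ)..s, v3 τ) := by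
      rw [intervalIntegral.integral_add v1int (v4int.add v3int),
        intervalIntegral.integral_add v4int v3int]
    have hv3val : ∫ τ in (0:ℝ)..s, v3 τ = h s * (s^(n-2)*(ε+s^2)) * A s
        - (∫ τ in (0:ℝ)..s, v1 τ) - ∫ τ in (0:ℝ)..s, v4 τ := by
      rw [← hsplit, hadd]; ring
    -- bounds for the four pieces
    have busA : |h s * (s^(n-2)*(ε+s^2)) * A s| ≤ C0 * (s * (h s * (s^(n-2)*(ε+s^2)))) := by
      have e : |h s * (s^(n-2)*(ε+s^2)) * A s| = h s * (s^(n-2)*(ε+s^2)) * |A s| := by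
        rw [abs_mul, abs_of_nonneg (mul_nonneg (hh0 s hsIcc) hws0.le)]
      rw [e]
      calc h s * (s^(n-2)*(ε+s^2)) * |A s| ≤ h s * (s^(n-2)*(ε+s^2)) * (C0 * s) :=
          mul_le_mul_of_nonneg_left (hAb s hs) (mul_nonneg (hh0 s hsIcc) hws0.le)
        _ = C0 * (s * (h s * (s^(n-2)*(ε+s^2)))) := by ring
    have b1 : |∫ τ in (0:ℝ)..s, v1 τ| ≤ (s^(n-2)*(ε+s^2)) * (C0*s) * h s := by
      have step1 : |∫ τ in (0:ℝ)..s, v1 τ| ≤ ∫ τ in (0:ℝ)..s, |v1 τ| :=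
        intervalIntegral.abs_integral_le_integral_abs hs.1.le
      have step2 : ∫ τ in (0:ℝ)..s, |v1 τ|
          ≤ ∫ τ in (0:ℝ)..s, (s^(n-2)*(ε+s^2)) * (C0*s) * deriv h τ := by
        rw [intervalIntegral.integral_of_le hs.1.le, intervalIntegral.integral_of_le hs.1.le]
        apply MeasureTheory.setIntegral_mono_on v1int.abs.1
          (((hdint s hs).const_mul ((s^(n-2)*(ε+s^2)) * (C0*s))).1) measurableSet_Ioc
        exact fun τ hτ => v1bound τ hτ
      have step3 : ∫ τ in (0:ℝ)..s, (s^(n-2)*(ε+s^2)) * (C0*s) * deriv h τ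
          = (s^(n-2)*(ε+s^2)) * (C0*s) * h s := by
        rw [intervalIntegral.integral_const_mul, hdftc s hs]
      linarith
    have v4bound : ∀ τ ∈ Ioc (0:ℝ) s, |v4 τ| ≤ h s * (C0*s) * wD τ := by
      intro τ hτ
      have hτ1 : τ ∈ Ioo (0:ℝ) 1 := hIocIoo hτ
      have hτIcc : τ ∈ Icc (0:ℝ) 1 := ⟨hτ.1.le, hτ1.2.le⟩
      have e : |v4 τ| = (h τ * wD τ) * |A τ| := by
        rw [hv4def, abs_mul,
          abs_of_nonneg (mul_nonneg (hh0 τ hτIcc) (hwdnn τ hτ.1.le))]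
      rw [e]
      calc (h τ * wD τ) * |A τ| ≤ (h s * wD τ) * (C0 * s) := by
            apply mul_le_mul ?_ ?_ (abs_nonneg _) (mul_nonneg (hh0 s hsIcc) (hwdnn τ hτ.1.le))
            · exact mul_le_mul_of_nonneg_right (hmono hτIcc hsIcc hτ.2) (hwdnn τ hτ.1.le)
            · calc |A τ| ≤ C0 * τ := hAb τ hτ1
                _ ≤ C0 * s := by nlinarith [hτ.2, hC0]
        _ = h s * (C0*s) * wD τ := by ring
    have b4 : |∫ τ in (0:ℝ)..s, v4 τ| ≤ h s * (C0*s) * (s^(n-2)*(ε+s^2)) := by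
      have step1 : |∫ τ in (0:ℝ)..s, v4 τ| ≤ ∫ τ in (0:ℝ)..s, |v4 τ| :=
        intervalIntegral.abs_integral_le_integral_abs hs.1.le
      have step2 : ∫ τ in (0:ℝ)..s, |v4 τ| ≤ ∫ τ in (0:ℝ)..s, h s * (C0*s) * wD τ := by
        rw [intervalIntegral.integral_of_le hs.1.le, intervalIntegral.integral_of_le hs.1.le]
        apply MeasureTheory.setIntegral_mono_on v4int.abs.1
          (((hwdc.intervalIntegrable 0 s).const_mul (h s * (C0*s))).1) measurableSet_Ioc
        exact fun τ hτ => v4bound τ hτ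
      have step3 : ∫ τ in (0:ℝ)..s, h s * (C0*s) * wD τ ≤ h s * (C0*s) * (s^(n-2)*(ε+s^2)) := by
        rw [intervalIntegral.integral_const_mul]
        exact mul_le_mul_of_nonneg_left (hwftc s hs.1.le)
          (mul_nonneg (hh0 s hsIcc) (mul_nonneg hC0.le hs.1.le))
      linarith
    have bB : |∫ τ in (0:ℝ)..s, bP τ| ≤ h s * (s^(n-2)*(ε+s^2)) * C0 * s := by
      have key := intervalIntegral.norm_integral_le_of_norm_le_const
        (C := h s * (s^(n-2)*(ε+s^2)) * C0) (f := bP) (a := 0) (b := s) ?_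
      · rw [Real.norm_eq_abs] at key
        calc |∫ τ in (0:ℝ)..s, bP τ| ≤ h s * (s^(n-2)*(ε+s^2)) * C0 * |s - 0| := key
          _ = h s * (s^(n-2)*(ε+s^2)) * C0 * s := by
              rw [sub_zero, abs_of_nonneg hs.1.le]
      · intro x hx
        rw [uIoc_of_le hs.1.le] at hx
        have hx1 : x ∈ Ioo (0:ℝ) 1 := hIocIoo hx
        have hxIcc : x ∈ Icc (0:ℝ) 1 := ⟨hx.1.le, hx1.2.le⟩
        have hw0x : (0:ℝ) ≤ x^(n-2)*(ε+x^2) := (hwpos x hx.1).le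
        have hbnn : (0:ℝ) ≤ h x * x^(n-2) * (ε + x^2) :=
          mul_nonneg (mul_nonneg (hh0 x hxIcc) (pow_nonneg hx.1.le _)) (hεs x).le
        have e : ‖bP x‖ = (h x * (x^(n-2)*(ε+x^2))) * |B x| := by
          rw [Real.norm_eq_abs, hbPdef]
          simp only []
          rw [abs_mul, abs_of_nonneg hbnn]
          ring
        rw [e]
        calc (h x * (x^(n-2)*(ε+x^2))) * |B x| ≤ (h s * (s^(n-2)*(ε+s^2))) * C0 :=
            mul_le_mul (mul_le_mul (hmono hxIcc hsIcc hx.2) (hwmono x s hx.1.le hx.2)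
              hw0x (hh0 s hsIcc)) (hBb x hx1) (abs_nonneg _)
              (mul_nonneg (hh0 s hsIcc) hws0.le)
          _ = h s * (s^(n-2)*(ε+s^2)) * C0 := by ring
    -- combine all pieces
    have habs3 : |∫ τ in (0:ℝ)..s, v3 τ| ≤ C0 * (s * (h s * (s^(n-2)*(ε+s^2))))
        + (s^(n-2)*(ε+s^2)) * (C0*s) * h s + h s * (C0*s) * (s^(n-2)*(ε+s^2)) := by
      rw [hv3val]
      have t1 := abs_sub (h s * (s^(n-2)*(ε+s^2)) * A s - ∫ τ in (0:ℝ)..s, v1 τ)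
        (∫ τ in (0:ℝ)..s, v4 τ)
      have t2 := abs_sub (h s * (s^(n-2)*(ε+s^2)) * A s) (∫ τ in (0:ℝ)..s, v1 τ)
      linarith [busA, b1, b4]
    have hIeq : I s = (∫ τ in (0:ℝ)..s, v3 τ) + ∫ τ in (0:ℝ)..s, bP τ := by
      show ∫ τ in (0:ℝ)..s, φ τ = _
      rw [intervalIntegral.integral_congr (g := fun τ => v3 τ + bP τ)
        (fun τ _ => by simp only [hφdef, hv3def, hbPdef]; ring)]
      exact intervalIntegral.integral_add v3int bPint
    calc |I s| ≤ |∫ τ in (0:ℝ)..s, v3 τ| + |∫ τ in (0:ℝ)..s, bP τ| := by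
          rw [hIeq]; exact abs_add_le _ _
      _ ≤ 4 * C0 * (s * (h s * (s^(n-2)*(ε+s^2)))) := by
          linarith [habs3, bB]
  -- bound on f
  have fbound : ∀ s ∈ Ioo (0:ℝ) 1, |f s| ≤ 4 * C0 := by
    intro s hs
    have hX : (0:ℝ) < (h s)^2 * s^(n-2) * (ε + s^2) :=
      mul_pos (mul_pos (pow_pos (hpos s hs) 2) (pow_pos hs.1 _)) (hεs s)
    have e : |f s| = ((h s)^2 * s^(n-2) * (ε + s^2))⁻¹ * |I s| := by
      rw [show f s = ((h s)^2 * s^(n-2) * (ε + s^2))⁻¹ * I s from rfl, abs_mul,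
        abs_of_nonneg (inv_nonneg.2 hX.le)]
    rw [e]
    have hhs := hpos s hs
    calc ((h s)^2 * s^(n-2) * (ε + s^2))⁻¹ * |I s|
        ≤ ((h s)^2 * s^(n-2) * (ε + s^2))⁻¹ * (4 * C0 * (s * (h s * (s^(n-2)*(ε+s^2))))) :=
          mul_le_mul_of_nonneg_left (keyI s hs) (inv_nonneg.2 hX.le)
      _ = 4 * C0 * (s / h s) := by
          have hP : (s:ℝ)^(n-2) ≠ 0 := ne_of_gt (pow_pos hs.1 _)
          field_simp
      _ ≤ 4 * C0 * 1 := by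
          apply mul_le_mul_of_nonneg_left _ (by linarith : (0:ℝ) ≤ 4 * C0)
          exact (div_le_one hhs).2 (hbd s hs).1
      _ = 4 * C0 := mul_one _
  -- continuity of f on (0,1)
  have hfc : ContinuousOn f (Ioo (0:ℝ) 1) := by
    intro s hs
    have hX : ((h s)^2 * s^(n-2) * (ε + s^2)) ≠ 0 :=
      ne_of_gt (mul_pos (mul_pos (pow_pos (hpos s hs) 2) (pow_pos hs.1 _)) (hεs s))
    have c1 : ContinuousAt (fun s : ℝ => ((h s)^2 * s^(n-2) * (ε + s^2))⁻¹) s :=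
      ContinuousAt.inv₀
        ((((hC2 s hs).continuousAt.pow 2).mul (continuous_pow (n-2)).continuousAt).mul
          (continuous_const.add (continuous_pow 2)).continuousAt) hX
    have c2 : ContinuousAt I s := (hI' s hs).continuousAt
    exact (c1.mul c2).continuousWithinAt
  -- second bullet: integrability of f
  have int2 : ∀ r ∈ Ioo (0:ℝ) 1, IntervalIntegrable f MeasureTheory.volume 0 r := by
    intro r hr
    have hIocIoo : Ioc (0:ℝ) r ⊆ Ioo (0:ℝ) 1 := fun x hx => ⟨hx.1, lt_of_le_of_lt hx.2 hr.2⟩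
    apply IntervalIntegrable.mono_fun' (g := fun _ => 4 * C0) intervalIntegrable_const
    · rw [uIoc_of_le hr.1.le]
      exact (hfc.mono hIocIoo).aestronglyMeasurable measurableSet_Ioc
    · rw [uIoc_of_le hr.1.le]
      refine (MeasureTheory.ae_restrict_iff' measurableSet_Ioc).2 (.of_forall fun x hx => ?_)
      simpa [Real.norm_eq_abs] using fbound x (hIocIoo hx)
  have hG' : ∀ r ∈ Ioo (0:ℝ) 1, HasDerivAt G (f r) r := by
    intro r hr
    exact intervalIntegral.integral_hasDerivAt_right (int2 r hr)
      (hfc.stronglyMeasurableAtFilter isOpen_Ioo r hr)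
      (hfc.continuousAt (Ioo_mem_nhds hr.1 hr.2))
  have Gbound : ∀ r ∈ Ioo (0:ℝ) 1, |G r| ≤ 4 * C0 * r := by
    intro r hr
    have hIocIoo : Ioc (0:ℝ) r ⊆ Ioo (0:ℝ) 1 := fun x hx => ⟨hx.1, lt_of_le_of_lt hx.2 hr.2⟩
    have key := intervalIntegral.norm_integral_le_of_norm_le_const (C := 4*C0) (f := f)
      (a := 0) (b := r) ?_
    · rw [Real.norm_eq_abs, sub_zero, abs_of_nonneg hr.1.le] at key
      exact key
    · intro x hx
      rw [uIoc_of_le hr.1.le] at hx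
      rw [Real.norm_eq_abs]
      exact fbound x (hIocIoo hx)
  -- smoothness
  have e2cast : (2 : WithTop ℕ∞) = 1 + 1 := by norm_num
  have e1cast : (1 : WithTop ℕ∞) = 0 + 1 := by norm_num
  have hC2on : ContDiffOn ℝ 2 h (Ioo (0:ℝ) 1) := fun x hx => (hC2 x hx).contDiffWithinAt
  have hdC1 : ContDiffOn ℝ 1 (deriv h) (Ioo (0:ℝ) 1) := by
    have := hC2on
    rw [e2cast] at this
    exact ((contDiffOn_succ_iff_deriv_of_isOpen isOpen_Ioo).1 this).2.2
  have hIC1 : ContDiffOn ℝ 1 I (Ioo (0:ℝ) 1) := by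
    rw [e1cast]
    refine (contDiffOn_succ_iff_deriv_of_isOpen isOpen_Ioo).2 ⟨?_, by simp, ?_⟩
    · exact fun s hs => ((hI' s hs).differentiableAt).differentiableWithinAt
    · rw [contDiffOn_zero]
      exact hφIoo.congr (fun s hs => (hI' s hs).deriv)
  have hinvC1 : ContDiffOn ℝ 1 (fun s : ℝ => ((h s)^2 * s^(n-2) * (ε + s^2))⁻¹)
      (Ioo (0:ℝ) 1) := by
    apply ContDiffOn.inv
    · exact (((hC2on.of_le (by norm_num)).pow 2).mul (contDiff_id.pow (n-2)).contDiffOn).mul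
        ((contDiff_const.add (contDiff_id.pow 2)).contDiffOn)
    · intro x hx
      exact ne_of_gt (mul_pos (mul_pos (pow_pos (hpos x hx) 2) (pow_pos hx.1 _)) (hεs x))
  have hfC1 : ContDiffOn ℝ 1 f (Ioo (0:ℝ) 1) := hinvC1.mul hIC1
  have hGC2 : ContDiffOn ℝ 2 G (Ioo (0:ℝ) 1) := by
    rw [e2cast]
    refine (contDiffOn_succ_iff_deriv_of_isOpen isOpen_Ioo).2 ⟨?_, by simp, ?_⟩
    · exact fun r hr => ((hG' r hr).differentiableAt).differentiableWithinAt
    · exact hfC1.congr (fun r hr => (hG' r hr).deriv)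
  have hgC2 : ContDiffOn ℝ 2 (fun r => h r * G r) (Ioo (0:ℝ) 1) := hC2on.mul hGC2
  refine ⟨int1, int2, ?_, ?_, ?_⟩
  · -- C² regularity of g
    intro r hr
    rw [hvp]
    exact hgC2.contDiffAt (Ioo_mem_nhds hr.1 hr.2)
  · -- Lg = H
    intro r hr
    rw [hvp]
    have hrne : r ≠ 0 := ne_of_gt hr.1
    have hεr : (ε + r^2) ≠ 0 := ne_of_gt (hεs r)
    have hhr0 : h r ≠ 0 := ne_of_gt (hpos r hr)
    have hPr : r^(n-2) ≠ 0 := pow_ne_zero _ hrne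
    have hγ0 : γ ≠ 0 := by linarith
    have hhd : HasDerivAt h (deriv h r) r := (hdiff r hr).hasDerivAt
    have hdd : HasDerivAt (deriv h) (deriv (deriv h) r) r :=
      ((hdC1.differentiableOn one_ne_zero r hr).differentiableAt (Ioo_mem_nhds hr.1 hr.2)).hasDerivAt
    have hGr : HasDerivAt G (f r) r := hG' r hr
    have hXne : ((h r)^2 * r^(n-2) * (ε + r^2)) ≠ 0 :=
      mul_ne_zero (mul_ne_zero (pow_ne_zero _ hhr0) hPr) hεr
    have hfr : HasDerivAt f
        (-((((2:ℕ):ℝ) * h r ^ (2-1) * deriv h r * r^(n-2)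
              + h r^2 * (((n-2:ℕ):ℝ) * r^(n-2-1))) * (ε + r^2)
            + h r^2 * r^(n-2) * (((2:ℕ):ℝ) * r^(2-1))) / ((h r)^2 * r^(n-2) * (ε + r^2))^2 * I r
          + ((h r)^2 * r^(n-2) * (ε + r^2))⁻¹ * φ r) r :=
      ((((hhd.pow 2).mul (hasDerivAt_pow (n-2) r)).mul
        ((hasDerivAt_pow 2 r).const_add ε)).inv hXne).mul (hI' r hr)
    have e1 : deriv (fun x => h x * G x) r = deriv h r * G r + h r * f r := (hhd.mul hGr).deriv
    have hder_ev : deriv (fun x => h x * G x) =ᶠ[nhds r]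
        (fun x => deriv h x * G x + h x * f x) := by
      filter_upwards [Ioo_mem_nhds hr.1 hr.2] with x hx
      exact (((hdiff x hx).hasDerivAt).mul (hG' x hx)).deriv
    have e2 : deriv (deriv (fun x => h x * G x)) r
        = deriv (fun x => deriv h x * G x + h x * f x) r := hder_ev.deriv_eq
    have e3 : deriv (fun x => deriv h x * G x + h x * f x) r
        = (deriv (deriv h) r * G r + deriv h r * f r)
          + (deriv h r * f r
            + h r * (-((((2:ℕ):ℝ) * h r ^ (2-1) * deriv h r * r^(n-2)
                  + h r^2 * (((n-2:ℕ):ℝ) * r^(n-2-1))) * (ε + r^2)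
                + h r^2 * r^(n-2) * (((2:ℕ):ℝ) * r^(2-1)))
                  / ((h r)^2 * r^(n-2) * (ε + r^2))^2 * I r
              + ((h r)^2 * r^(n-2) * (ε + r^2))⁻¹ * φ r)) :=
      ((hdd.mul hGr).add (hhd.mul hfr)).deriv
    have hlhr := hLh r hr
    simp only [Lop] at hlhr
    have hlh' : deriv (deriv h) r = (((n:ℝ)-2)/r^2 + 2/(γ*(ε+r^2))) * h r
        - (((n:ℝ)-2)/r + 2*r/(ε+r^2)) * deriv h r := by linarith
    have hfrI : f r = ((h r)^2 * r^(n-2) * (ε + r^2))⁻¹ * I r := rfl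
    have hφr : φ r = h r * r^(n-2) * (ε + r^2) * (deriv A r + B r) := rfl
    have hc : ((n-2:ℕ):ℝ) * r^(n-2-1) = ((n:ℝ)-2) * r^(n-2) / r := by
      rcases eq_or_lt_of_le hn with h2 | h3
      · rw [← h2]
        norm_num
      · have hcast : ((n-2:ℕ):ℝ) = (n:ℝ)-2 := by
          rw [Nat.cast_sub hn]; norm_num
        have hepow : r^(n-2) = r^(n-2-1) * r := by
          conv_lhs => rw [show n - 2 = (n-2-1)+1 by omega]
          rw [pow_succ]
        rw [hcast, hepow, mul_div_assoc, mul_div_cancel_right₀ _ hrne]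
    simp only [Lop]
    rw [e2, e3, e1, hlh', hfrI, hφr, hc]
    push_cast
    norm_num
    field_simp
    ring
  · -- the bound
    intro r hr
    rw [hvp]
    show |h r * G r| ≤ 4 * C0 * r ^ (1 + alphaN n γ)
    have hα : r ^ (1 + alphaN n γ) = r * r ^ alphaN n γ := by
      rw [Real.rpow_add hr.1, Real.rpow_one]
    have habs : |h r * G r| = h r * |G r| := by
      rw [abs_mul, abs_of_nonneg (hh0 r ⟨hr.1.le, hr.2.le⟩)]
    rw [habs, hα]
    calc h r * |G r| ≤ r ^ alphaN n γ * (4 * C0 * r) :=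
        mul_le_mul (hbd r hr).2 (Gbound r hr) (abs_nonneg _) (Real.rpow_nonneg hr.1.le _)
      _ = 4 * C0 * (r * r ^ alphaN n γ) := by ring
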